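/- In the group G = F₃^(ω) (the direct sum of countably many copies of Z/3Z), let Φ_N = {x : xᵢ = 0 for all i > N}, and let A = ⋃_{N≥1} ⋃_{i∈{1}} (Φ_{N−1} + i·e_N) where e_N is the N-th canonical basis vector (i.e., A consists of all x whose last nonzero coordinate equals 1). Then the density of A along Φ equals 1/2, and there is no infinite set B ⊆ G with B + B ⊆ A. -/

import Mathlib

open Filter Pointwise
open scoped Classical

/-- The group `𝔽₃^(ω)`: finitely supported sequences with values in `ℤ/3ℤ`. -/
abbrev F3omega := ℕ →₀ ZMod 3

/-- `Φ_N = {x : xᵢ = 0 for all i > N}`. -/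
def PhiF3 (N : ℕ) : Set F3omega := {x | ∀ i : ℕ, N < i → x i = 0}

/-- `A` consists of all `x` whose last nonzero coordinate equals `1`. -/
def AF3 : Set F3omega := {x | ∃ N : ℕ, x N = 1 ∧ ∀ m : ℕ, N < m → x m = 0}

noncomputable def phiEquiv (N : ℕ) : (PhiF3 N) ≃ (Fin (N+1) → ZMod 3) where
  toFun x i := (x : F3omega) i.1
  invFun f := ⟨Finsupp.onFinset (Finset.range (N+1))
      (fun n => if h : n < N+1 then f ⟨n, h⟩ else 0)
      (fun n hn => by
        rw [Finset.mem_range]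
        by_contra hc
        exact hn (dif_neg hc)),
    fun i hi => by
      simp only [Finsupp.onFinset_apply]
      rw [dif_neg]; omega⟩
  left_inv x := by
    ext n
    simp only [Finsupp.onFinset_apply]
    by_cases h : n < N+1
    · rw [dif_pos h]
    · rw [dif_neg h]
      exact (x.2 n (by omega)).symm
  right_inv f := by
    funext i
    simp only [Finsupp.onFinset_apply]
    rw [dif_pos i.2]

lemma phi_finite (N : ℕ) : (PhiF3 N).Finite := by
  rw [← Set.finite_coe_iff]
  exact Finite.of_equiv _ (phiEquiv N).symm

lemma phi_ncard (N : ℕ) : (PhiF3 N).ncard = 3^(N+1) := by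
  rw [← Nat.card_coe_set_eq, Nat.card_congr (phiEquiv N)]
  simp [Nat.card_eq_fintype_card]

lemma zero_mem_phi (N : ℕ) : (0 : F3omega) ∈ PhiF3 N := fun i _ => rfl

lemma zero_not_mem_A : (0 : F3omega) ∉ AF3 := by
  rintro ⟨M, h1, -⟩
  simp at h1

lemma not_both (x : F3omega) (hx : x ∈ AF3) (hnx : -x ∈ AF3) : False := by
  obtain ⟨N1, h1, h1'⟩ := hx
  obtain ⟨N2, h2, h2'⟩ := hnx
  simp only [Finsupp.coe_neg, Pi.neg_apply] at h2 h2'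
  rcases lt_trichotomy N1 N2 with h | h | h
  · rw [h1' N2 h] at h2; revert h2; decide
  · subst h; rw [h1] at h2; revert h2; decide
  · have := h2' N1 h
    rw [h1] at this; revert this; decide

lemma mem_or_neg_mem (x : F3omega) (hx : x ≠ 0) : x ∈ AF3 ∨ -x ∈ AF3 := by
  have hs : x.support.Nonempty := Finsupp.support_nonempty_iff.mpr hx
  set k := x.support.max' hs with hk
  have hk1 : x k ≠ 0 := Finsupp.mem_support_iff.mp (x.support.max'_mem hs)
  have hk2 : ∀ m, k < m → x m = 0 := by
    intro m hm
    by_contra hc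
    exact absurd (x.support.le_max' m (Finsupp.mem_support_iff.mpr hc)) (by omega)
  have : x k = 1 ∨ x k = 2 := by
    revert hk1; generalize x k = a; revert a; decide
  rcases this with h | h
  · exact Or.inl ⟨k, h, hk2⟩
  · refine Or.inr ⟨k, ?_, fun m hm => ?_⟩
    · simp [h]; decide
    · simp [hk2 m hm]

lemma neg_mem_phi {N : ℕ} {x : F3omega} (hx : x ∈ PhiF3 N) : -x ∈ PhiF3 N := by
  intro i hi
  simp [hx i hi]

lemma A_ncard (N : ℕ) : 2 * (AF3 ∩ PhiF3 N).ncard = 3^(N+1) - 1 := by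
  set A' := AF3 ∩ PhiF3 N with hA'
  set B' := (fun x : F3omega => -x) '' A' with hB'
  set S := PhiF3 N \ {0} with hS
  have hAne (x : F3omega) (hx : x ∈ AF3) : x ≠ 0 := by
    rintro rfl; exact zero_not_mem_A hx
  have hA'S : A' ⊆ S := fun x ⟨h1, h2⟩ => ⟨h2, hAne x h1⟩
  have hB'S : B' ⊆ S := by
    rintro y ⟨x, ⟨hx1, hx2⟩, rfl⟩
    refine ⟨neg_mem_phi hx2, ?_⟩
    simp only [Set.mem_singleton_iff, neg_eq_zero]
    exact hAne x hx1
  have hdisj : Disjoint A' B' := by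
    rw [Set.disjoint_left]
    rintro y ⟨hy1, _⟩ ⟨x, ⟨hx1, _⟩, rfl⟩
    exact not_both x hx1 (by simpa using hy1)
  have hunion : S = A' ∪ B' := by
    apply Set.Subset.antisymm
    · rintro x ⟨hx1, hx2⟩
      simp only [Set.mem_singleton_iff] at hx2
      rcases mem_or_neg_mem x hx2 with h | h
      · exact Or.inl ⟨h, hx1⟩
      · exact Or.inr ⟨-x, ⟨h, neg_mem_phi hx1⟩, neg_neg x⟩
    · exact Set.union_subset hA'S hB'S
  have hfinA : A'.Finite := (phi_finite N).subset (Set.inter_subset_right)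
  have hfinB : B'.Finite := hfinA.image _
  have hcard : S.ncard = A'.ncard + B'.ncard := by
    rw [hunion, Set.ncard_union_eq hdisj hfinA hfinB]
  have hBcard : B'.ncard = A'.ncard := Set.ncard_image_of_injective _ neg_injective
  have hScard : S.ncard = 3^(N+1) - 1 := by
    rw [hS, Set.ncard_diff_singleton_of_mem (zero_mem_phi N), phi_ncard]
  omega

theorem stmt16 :
    Tendsto (fun N => ((AF3 ∩ PhiF3 N).ncard : ℝ) / ((PhiF3 N).ncard : ℝ))
      atTop (nhds (1 / 2)) ∧
    ∀ B : Set F3omega, B.Infinite → ¬ (B + B ⊆ AF3) := by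
  constructor
  · have h0 : Tendsto (fun N : ℕ => ((1:ℝ)/3)^(N+1)) atTop (nhds 0) := by
      have h := tendsto_pow_atTop_nhds_zero_of_lt_one
        (by norm_num : (0:ℝ) ≤ 1/3) (by norm_num : (1:ℝ)/3 < 1)
      exact h.comp (tendsto_add_atTop_nat 1)
    have h1 : Tendsto (fun N : ℕ => (1 - ((1:ℝ)/3)^(N+1))/2) atTop (nhds (1/2)) := by
      have h2 : Tendsto (fun N : ℕ => ((1:ℝ) - ((1:ℝ)/3)^(N+1))/2) atTop
          (nhds (((1:ℝ) - 0)/2)) := (Tendsto.sub tendsto_const_nhds h0).div_const 2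
      simpa using h2
    refine h1.congr fun N => ?_
    have hA : ((AF3 ∩ PhiF3 N).ncard : ℝ) = ((3:ℝ)^(N+1) - 1)/2 := by
      have h := A_ncard N
      have h3 : (1:ℕ) ≤ 3^(N+1) := Nat.one_le_pow _ _ (by norm_num)
      have : ((2 * (AF3 ∩ PhiF3 N).ncard : ℕ) : ℝ) = ((3^(N+1) - 1 : ℕ) : ℝ) := by
        rw [h]
      push_cast [h3] at this
      linarith
    have hP : ((PhiF3 N).ncard : ℝ) = (3:ℝ)^(N+1) := by
      rw [phi_ncard]; push_cast; ring
    rw [hA, hP]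
    have h3 : (3:ℝ)^(N+1) ≠ 0 := by positivity
    have hp : ((1:ℝ)/3)^(N+1) = 1/3^(N+1) := by rw [div_pow, one_pow]
    rw [hp, div_div, mul_comm, ← div_div, sub_div ((3:ℝ)^(N+1)) 1 ((3:ℝ)^(N+1)),
      div_self h3]
  · rintro B hB hBB
    -- every b in B is nonzero with top coordinate 2
    have key : ∀ b ∈ B, ∃ Nb : ℕ, b Nb = 2 ∧ ∀ m, Nb < m → b m = 0 := by
      intro b hb
      have h2b : b + b ∈ AF3 := hBB (Set.add_mem_add hb hb)
      obtain ⟨Nb, h1, h2⟩ := h2b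
      simp only [Finsupp.coe_add, Pi.add_apply] at h1 h2
      refine ⟨Nb, ?_, fun m hm => ?_⟩
      · have := h1
        revert this; generalize b Nb = a; revert a; decide
      · have := h2 m hm
        revert this; generalize b m = a; revert a; decide
    obtain ⟨b₁, hb₁⟩ := hB.nonempty
    obtain ⟨N₁, hN₁, hN₁'⟩ := key b₁ hb₁
    have : ¬ (B ⊆ PhiF3 N₁) := fun h => hB ((phi_finite N₁).subset h)
    obtain ⟨b₂, hb₂, hb₂'⟩ := Set.not_subset.mp this
    obtain ⟨N₂, hN₂, hN₂'⟩ := key b₂ hb₂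
    have hN₁₂ : N₁ < N₂ := by
      simp only [PhiF3, Set.mem_setOf_eq] at hb₂'
      push_neg at hb₂'
      obtain ⟨m, hm, hm'⟩ := hb₂'
      by_contra hc
      push_neg at hc
      exact hm' (hN₂' m (lt_of_le_of_lt hc hm))
    have hsum : b₁ + b₂ ∈ AF3 := hBB (Set.add_mem_add hb₁ hb₂)
    obtain ⟨K, hK1, hK2⟩ := hsum
    simp only [Finsupp.coe_add, Pi.add_apply] at hK1 hK2
    have hv : b₁ N₂ + b₂ N₂ = 2 := by rw [hN₁' N₂ hN₁₂, hN₂]; ring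
    rcases lt_trichotomy K N₂ with h | h | h
    · have := hK2 N₂ h; rw [hv] at this; revert this; decide
    · subst h; rw [hv] at hK1; revert hK1; decide
    · rw [hN₁' K (by omega), hN₂' K h] at hK1; revert hK1; decide
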